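/- No-go for isotropic-like states: let φ be a pure state with R_F(φ) = F_F(φ)^{-1} =: λ, let σ ∈ F satisfy φ ≤ λσ, and fix ε ∈ (0,1) with ε ≤ (λ−1)/λ. Define ρ_ε = (1−ε)φ + ε(λσ−φ)/(λ−1). Then for any state τ with Ω_F(τ) ≤ Ω_F(ρ_ε), the fidelity with φ satisfies ⟨φ|τ|φ⟩ ≤ 1 − ε'. That is, if ⟨φ|τ|φ⟩ ≥ 1−ε' with ε' < ε, then Ω_F(τ) > Ω_F(ρ_ε), so no resource-non-generating transformation (under which Ω_F is monotone) can map ρ_ε to τ. -/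

import Mathlib

open scoped ENNReal ComplexOrder
open Matrix

noncomputable section

variable {ι κ : Type*}

/-- Loewner order: `A ≤ B` iff `B - A` is positive semidefinite. -/
def Loe [Fintype ι] (A B : Matrix ι ι ℂ) : Prop := (B - A).PosSemidef

/-- The (non-logarithmic) max-relative entropy `Rmax(ρ‖σ) = inf {λ : ρ ≤ λσ}`,
with the convention `inf ∅ = ∞`. -/
noncomputable def Rmax [Fintype ι] (ρ σ : Matrix ι ι ℂ) : ℝ≥0∞ :=
  sInf {x : ℝ≥0∞ | ∃ l : ℝ, 0 ≤ l ∧ x = ENNReal.ofReal l ∧ ((l : ℂ) • σ - ρ).PosSemidef}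

/-- A density matrix: positive semidefinite with unit trace. -/
def IsState [Fintype ι] (ρ : Matrix ι ι ℂ) : Prop := ρ.PosSemidef ∧ ρ.trace = 1

/-- The projective robustness `Ω_F(ρ) = inf_{σ∈F} Rmax(ρ‖σ) · Rmax(σ‖ρ)`. -/
noncomputable def Omega [Fintype ι] (F : Set (Matrix ι ι ℂ)) (ρ : Matrix ι ι ℂ) : ℝ≥0∞ :=
  ⨅ σ ∈ F, Rmax ρ σ * Rmax σ ρ

/-- The cone generated by `F`: `{cσ : c ≥ 0, σ ∈ F}`. -/
def coneF [Fintype ι] (F : Set (Matrix ι ι ℂ)) : Set (Matrix ι ι ℂ) :=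
  {X | ∃ c : ℝ, 0 ≤ c ∧ ∃ σ ∈ F, X = (c : ℂ) • σ}

/-- The affine hull of `F` (real affine combinations). -/
def affHull [Fintype ι] (F : Set (Matrix ι ι ℂ)) : Set (Matrix ι ι ℂ) :=
  {Z | ∃ (k : ℕ) (c : Fin k → ℝ) (σ : Fin k → Matrix ι ι ℂ),
    (∀ i, σ i ∈ F) ∧ (∑ i, c i) = 1 ∧ Z = ∑ i, ((c i : ℂ) • σ i)}

/-- The generalised robustness `R_F(ρ) = inf_{σ∈F} Rmax(ρ‖σ)`. -/
noncomputable def RF [Fintype ι] (F : Set (Matrix ι ι ℂ)) (ρ : Matrix ι ι ℂ) : ℝ≥0∞ :=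
  ⨅ σ ∈ F, Rmax ρ σ

/-- The resource weight `W_F(ρ) = (inf_{σ∈F} Rmax(σ‖ρ))⁻¹`. -/
noncomputable def WF [Fintype ι] (F : Set (Matrix ι ι ℂ)) (ρ : Matrix ι ι ℂ) : ℝ≥0∞ :=
  (⨅ σ ∈ F, Rmax σ ρ)⁻¹

lemma smul_psd' [Fintype ι] {A : Matrix ι ι ℂ} (hA : A.PosSemidef) {c : ℝ} (hc : 0 ≤ c) :
    ((c : ℂ) • A).PosSemidef := by
  refine Matrix.PosSemidef.of_dotProduct_mulVec_nonneg ?_ ?_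
  · unfold Matrix.IsHermitian
    rw [conjTranspose_smul, hA.1.eq]
    norm_num
  · intro x
    have h := hA.dotProduct_mulVec_nonneg x
    rw [Complex.nonneg_iff] at h ⊢
    rw [smul_mulVec, dotProduct_smul]
    constructor
    · simpa using mul_nonneg hc h.1
    · simp [← h.2]

lemma quad_le_trace' [Fintype ι] {A : Matrix ι ι ℂ} (hA : A.PosSemidef) {ψ : ι → ℂ}
    (hψ : star ψ ⬝ᵥ ψ = 1) : (star ψ ⬝ᵥ (A *ᵥ ψ)).re ≤ A.trace.re := by
  obtain ⟨B, rfl⟩ : ∃ B : Matrix ι ι ℂ, A = Bᴴ * B := by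
    classical
    open scoped MatrixOrder in
    obtain ⟨B, hB⟩ := CStarAlgebra.nonneg_iff_eq_star_mul_self.mp hA.nonneg
    exact ⟨B, hB⟩
  have hq : star ψ ⬝ᵥ ((Bᴴ * B) *ᵥ ψ) = star (B *ᵥ ψ) ⬝ᵥ (B *ᵥ ψ) := by
    rw [← mulVec_mulVec, dotProduct_mulVec, vecMul_conjTranspose, star_star]
  have hψ1 : ∑ j, Complex.normSq (ψ j) = 1 := by
    have : (star ψ ⬝ᵥ ψ).re = 1 := by rw [hψ]; simp
    rw [← this]
    simp [dotProduct, Complex.normSq_apply, Complex.mul_re, Complex.mul_im]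
  rw [hq]
  have hlhs : (star (B *ᵥ ψ) ⬝ᵥ (B *ᵥ ψ)).re = ∑ i, Complex.normSq ((B *ᵥ ψ) i) := by
    simp [dotProduct, Complex.normSq_apply, Complex.mul_re, Complex.mul_im]
  have htr : (Bᴴ * B).trace.re = ∑ i, ∑ j, Complex.normSq (B j i) := by
    simp [Matrix.trace, Matrix.diag, Matrix.mul_apply, Complex.normSq_apply,
      conjTranspose_apply, Complex.mul_re, Complex.mul_im]
  rw [hlhs, htr, Finset.sum_comm (γ := ι)]
  refine Finset.sum_le_sum fun i _ => ?_
  have h1 : Complex.normSq ((B *ᵥ ψ) i) ≤ (∑ j, ‖B i j‖ * ‖ψ j‖)^2 := by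
    rw [← Complex.sq_norm]
    have h := norm_sum_le Finset.univ (fun j => B i j * ψ j)
    simp only [norm_mul] at h
    apply pow_le_pow_left₀ (by positivity)
    simpa [Matrix.mulVec, dotProduct] using h
  have h2 := Finset.sum_mul_sq_le_sq_mul_sq Finset.univ (fun j => ‖B i j‖)
    (fun j => ‖ψ j‖)
  have h3 : ∑ j, ‖ψ j‖ ^ 2 = 1 := by
    simpa [Complex.sq_norm] using hψ1
  rw [h3, mul_one] at h2
  calc Complex.normSq ((B *ᵥ ψ) i) ≤ _ := h1
    _ ≤ ∑ j, ‖B i j‖^2 := h2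
    _ = ∑ j, Complex.normSq (B i j) := by simp [Complex.sq_norm]

lemma Rmax_le' [Fintype ι] {ρ σ : Matrix ι ι ℂ} {l : ℝ} (hl : 0 ≤ l)
    (h : ((l : ℂ) • σ - ρ).PosSemidef) : Rmax ρ σ ≤ ENNReal.ofReal l :=
  sInf_le ⟨l, hl, rfl, h⟩

lemma le_Rmax' [Fintype ι] {ρ σ : Matrix ι ι ℂ} {m : ℝ}
    (h : ∀ l : ℝ, 0 ≤ l → ((l : ℂ) • σ - ρ).PosSemidef → m ≤ l) :
    ENNReal.ofReal m ≤ Rmax ρ σ := by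
  refine le_sInf ?_
  rintro x ⟨l, hl, rfl, hpsd⟩
  exact ENNReal.ofReal_le_ofReal (h l hl hpsd)

lemma vecMulVec_psd [Fintype ι] (ψ : ι → ℂ) : (vecMulVec ψ (star ψ)).PosSemidef := by
  refine Matrix.PosSemidef.of_dotProduct_mulVec_nonneg ?_ ?_
  · unfold Matrix.IsHermitian
    ext i j
    simp [vecMulVec_apply, conjTranspose_apply, mul_comm]
  · intro x
    have key : star x ⬝ᵥ (vecMulVec ψ (star ψ) *ᵥ x)
        = (starRingEnd ℂ) (star ψ ⬝ᵥ x) * (star ψ ⬝ᵥ x) := by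
      simp only [mulVec, dotProduct, vecMulVec_apply, Pi.star_apply, map_sum, _root_.map_mul,
        Finset.mul_sum, Finset.sum_mul]
      rw [Finset.sum_comm]
      congr 1; funext j; congr 1; funext i
      simp [RingHomInvPair.comp_eq₂]
      ring
    rw [key, mul_comm, Complex.mul_conj, Complex.nonneg_iff]
    simp [Complex.normSq_nonneg]

set_option maxHeartbeats 1000000 in
/-- No-go for isotropic-like states: let `φ = |ψ⟩⟨ψ|` with
`R_F(φ) = F_F(φ)⁻¹ = λ`, `σ ∈ F` with `φ ≤ λσ`, and `ε ∈ (0,1)` with `ε ≤ (λ-1)/λ`.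
For `ρ_ε = (1-ε)φ + ε(λσ-φ)/(λ-1)`, any state `τ` with fidelity `⟨φ|τ|φ⟩ ≥ 1-ε'` for
`0 < ε' < ε` satisfies `Ω_F(τ) > Ω_F(ρ_ε)`; hence (by monotonicity of `Ω_F`) no free
transformation maps `ρ_ε` to `τ`. -/
theorem isotropic_fidelity_no_go [Fintype ι]
    (F : Set (Matrix ι ι ℂ)) (hF : IsClosed F) (hconv : Convex ℝ F)
    (hFstates : ∀ σ ∈ F, IsState σ)
    (ψ : ι → ℂ) (hψ : star ψ ⬝ᵥ ψ = 1)
    (φ : Matrix ι ι ℂ) (hφ : φ = vecMulVec ψ (star ψ))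
    (f : ℝ) (hf0 : 0 < f) (hf1 : f < 1)
    (hfmax : ∀ σ' ∈ F, (star ψ ⬝ᵥ (σ' *ᵥ ψ)).re ≤ f)
    (lam : ℝ) (hlamf : lam = f⁻¹) (hRF : RF F φ = ENNReal.ofReal lam)
    (σ : Matrix ι ι ℂ) (hσ : σ ∈ F) (hle : Loe φ ((lam : ℂ) • σ))
    (ε : ℝ) (hε0 : 0 < ε) (hε1 : ε < 1) (hεub : ε ≤ (lam - 1) / lam)
    (ρε : Matrix ι ι ℂ)
    (hρεdef : ρε = ((1 - ε : ℝ) : ℂ) • φ + ((ε / (lam - 1) : ℝ) : ℂ) • ((lam : ℂ) • σ - φ))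
    (τ : Matrix ι ι ℂ) (hτ : IsState τ)
    (ε' : ℝ) (hε'0 : 0 < ε') (hε'ε : ε' < ε)
    (hfid : 1 - ε' ≤ (star ψ ⬝ᵥ (τ *ᵥ ψ)).re) :
    Omega F ρε < Omega F τ := by
  have hflam : f * lam = 1 := by rw [hlamf]; field_simp
  have hlam1 : 1 < lam := by
    rw [hlamf]; rw [one_lt_inv_iff₀]; exact ⟨hf0, hf1⟩
  have hlam0 : 0 < lam := by linarith
  have hlamm1 : 0 < lam - 1 := by linarith
  have hεlam : ε * lam ≤ lam - 1 := by
    rw [le_div_iff₀ hlam0] at hεub; linarith [hεub]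
  -- coefficients
  set c : ℝ := 1 - ε - ε / (lam - 1) with hc_def
  have hc0 : 0 ≤ c := by
    rw [hc_def]
    have : ε / (lam - 1) ≤ 1 - ε := by
      rw [div_le_iff₀ hlamm1]; nlinarith
    linarith
  set a : ℝ := lam * (1 - ε) with ha_def
  set b : ℝ := (lam - 1) / (ε * lam) with hb_def
  have ha0 : 0 ≤ a := by rw [ha_def]; nlinarith
  have hb0 : 0 ≤ b := by rw [hb_def]; positivity
  have hφpsd : φ.PosSemidef := hφ ▸ vecMulVec_psd ψ
  have hleσ : (((lam : ℂ) • σ) - φ).PosSemidef := hle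
  -- achievability: (a:ℂ)•σ - ρε = c • (lam•σ - φ)
  have hA1 : ((a : ℂ) • σ - ρε) = (c : ℂ) • ((lam : ℂ) • σ - φ) := by
    rw [hρεdef, ha_def, hc_def]
    have hlne : ((lam : ℂ) - 1) ≠ 0 := by
      intro h
      have : (lam : ℂ) = 1 := by linear_combination h
      have : lam = (1 : ℝ) := by exact_mod_cast this
      linarith
    push_cast
    match_scalars <;> field_simp <;> ring
  have hA2 : ((b : ℂ) • ρε - σ) = ((b * c : ℝ) : ℂ) • φ := by
    rw [hρεdef, hb_def, hc_def]
    have hlne : ((lam : ℂ) - 1) ≠ 0 := by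
      intro h
      have : (lam : ℂ) = 1 := by linear_combination h
      have : lam = (1 : ℝ) := by exact_mod_cast this
      linarith
    have hεne : (ε : ℂ) ≠ 0 := by exact_mod_cast ne_of_gt hε0
    have hlamne : (lam : ℂ) ≠ 0 := by exact_mod_cast ne_of_gt hlam0
    push_cast
    match_scalars <;> field_simp <;> (try tauto) <;> norm_num
  have hach1 : Rmax ρε σ ≤ ENNReal.ofReal a := by
    apply Rmax_le' ha0
    rw [hA1]
    exact smul_psd' hleσ hc0
  have hach2 : Rmax σ ρε ≤ ENNReal.ofReal b := by
    apply Rmax_le' hb0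
    rw [hA2]
    exact smul_psd' hφpsd (mul_nonneg hb0 hc0)
  have hOρ : Omega F ρε ≤ ENNReal.ofReal ((1 - ε) * (lam - 1) / ε) := by
    have h1 : Omega F ρε ≤ Rmax ρε σ * Rmax σ ρε := iInf₂_le σ hσ
    have h2 : Rmax ρε σ * Rmax σ ρε ≤ ENNReal.ofReal a * ENNReal.ofReal b :=
      mul_le_mul' hach1 hach2
    have h3 : ENNReal.ofReal a * ENNReal.ofReal b = ENNReal.ofReal (a * b) :=
      (ENNReal.ofReal_mul ha0).symm
    have h4 : a * b = (1 - ε) * (lam - 1) / ε := by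
      rw [ha_def, hb_def]; field_simp
    calc Omega F ρε ≤ _ := h1
      _ ≤ _ := h2
      _ = _ := by rw [h3, h4]
  -- converse
  have hτψ : (star ψ ⬝ᵥ (τ *ᵥ ψ)).re ≤ 1 := by
    have := quad_le_trace' hτ.1 hψ
    rwa [hτ.2, Complex.one_re] at this
  have hOτ : ENNReal.ofReal ((1 - ε') * (lam - 1) / ε') ≤ Omega F τ := by
    refine le_iInf₂ fun σ' hσ' => ?_
    obtain ⟨hσ'psd, hσ'tr⟩ := hFstates σ' hσ'
    have hs := hfmax σ' hσ'
    set s : ℝ := (star ψ ⬝ᵥ (σ' *ᵥ ψ)).re with hs_def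
    set t : ℝ := (star ψ ⬝ᵥ (τ *ᵥ ψ)).re with ht_def
    have hre : ∀ (l : ℝ) (M N : Matrix ι ι ℂ),
        (star ψ ⬝ᵥ (((l : ℂ) • M - N) *ᵥ ψ)).re
          = l * (star ψ ⬝ᵥ (M *ᵥ ψ)).re - (star ψ ⬝ᵥ (N *ᵥ ψ)).re := by
      intro l M N
      rw [sub_mulVec, smul_mulVec, dotProduct_sub, dotProduct_smul, Complex.sub_re]
      congr 1
      rw [smul_eq_mul, Complex.mul_re]
      simp
    have hb1 : ENNReal.ofReal (lam * (1 - ε')) ≤ Rmax τ σ' := by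
      apply le_Rmax'
      intro l hl hpsd
      have hq := hpsd.dotProduct_mulVec_nonneg ψ
      rw [Complex.nonneg_iff] at hq
      have hq' : 0 ≤ l * s - t := by rw [hs_def, ht_def, ← hre]; exact hq.1
      have hls : l * s ≤ l * f := mul_le_mul_of_nonneg_left hs hl
      nlinarith [hfid, hflam, mul_le_mul_of_nonneg_right hls (le_of_lt hlam0)]
    have hb2 : ENNReal.ofReal ((1 - f) / ε') ≤ Rmax σ' τ := by
      apply le_Rmax'
      intro l hl hpsd
      have hq := quad_le_trace' hpsd hψ
      have htr : (((l : ℂ) • τ - σ').trace).re = l - 1 := by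
        rw [trace_sub, trace_smul, hτ.2, hσ'tr]
        simp
      rw [htr, hre] at hq
      -- l * t - s ≤ l - 1, so l * (1 - t) ≥ 1 - s ≥ 1 - f
      rw [div_le_iff₀ hε'0]
      have h1t : 1 - t ≤ ε' := by rw [ht_def]; linarith [hfid]
      have hsf : s ≤ f := hs
      nlinarith [mul_le_mul_of_nonneg_left h1t hl]
    calc ENNReal.ofReal ((1 - ε') * (lam - 1) / ε')
        = ENNReal.ofReal (lam * (1 - ε')) * ENNReal.ofReal ((1 - f) / ε') := by
          rw [← ENNReal.ofReal_mul (by nlinarith)]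
          congr 1
          field_simp
          nlinarith [hflam]
      _ ≤ Rmax τ σ' * Rmax σ' τ := mul_le_mul' hb1 hb2
  have hstrict : (1 - ε) * (lam - 1) / ε < (1 - ε') * (lam - 1) / ε' := by
    rw [div_lt_div_iff₀ hε0 hε'0]
    nlinarith
  calc Omega F ρε ≤ _ := hOρ
    _ < ENNReal.ofReal ((1 - ε') * (lam - 1) / ε') := by
        have hpos : 0 < (1 - ε') * (lam - 1) / ε' := by
          have h1 : 0 < 1 - ε' := by linarith
          positivity
        rw [ENNReal.ofReal_lt_ofReal_iff hpos]
        exact hstrict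
    _ ≤ _ := hOτ

end
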